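/- Let (V,g) be an n-dimensional (n ≥ 4) real vector space with a nondegenerate symmetric bilinear form g, and let A₁, A₂ be symmetric bilinear forms on V with A₂ = A₁ + λ·g for some λ ∈ ℝ. Then E(A₂) = E(A₁), where E(A) = g ∧ A² + ((n−2)/2)·A ∧ A − tr(A)·(g ∧ A) + ((tr(A)² − tr(A²))/(2(n−1)))·(g ∧ g). -/

import Mathlib

variable {V : Type*} [AddCommGroup V] [Module ℝ V]

/-- Kulkarni–Nomizu product of two (0,2)-tensors. -/
def kn (A B : V → V → ℝ) : V → V → V → V → ℝ := fun x1 x2 x3 x4 =>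
  A x1 x4 * B x2 x3 + A x2 x3 * B x1 x4 - A x1 x3 * B x2 x4 - A x2 x4 * B x1 x3

/-- The endomorphism `(X ∧_A Y)Z = A(Y,Z)X − A(X,Z)Y`. -/
def wedgeV (A : V → V → ℝ) (x y z : V) : V := A y z • x - A x z • y

/-- Tachibana tensor `Q(A,T)` of a (0,2)-tensor `A` and a (0,4)-tensor `T`. -/
def Q4 (A : V → V → ℝ) (T : V → V → V → V → ℝ) : V → V → V → V → V → V → ℝ :=
  fun x1 x2 x3 x4 x y =>
    -(T (wedgeV A x y x1) x2 x3 x4) - T x1 (wedgeV A x y x2) x3 x4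
      - T x1 x2 (wedgeV A x y x3) x4 - T x1 x2 x3 (wedgeV A x y x4)

/-- if `A₂ = A₁ + λ·g` then `E(A₂) = E(A₁)`. -/
theorem stmt_12 {V : Type*} [AddCommGroup V] [Module ℝ V] [FiniteDimensional ℝ V]
    (n : ℕ) (hn4 : 4 ≤ n) (hdim : Module.finrank ℝ V = n)
    (g A₁ A₂ : V →ₗ[ℝ] V →ₗ[ℝ] ℝ)
    (hg : ∀ x y, g x y = g y x)
    (hgnd : ∀ x : V, (∀ y : V, g x y = 0) → x = 0)
    (hA₁ : ∀ x y, A₁ x y = A₁ y x) (hA₂ : ∀ x y, A₂ x y = A₂ y x)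
    (a₁ a₂ : V →ₗ[ℝ] V)
    (ha₁ : ∀ x y, g (a₁ x) y = A₁ x y) (ha₂ : ∀ x y, g (a₂ x) y = A₂ x y)
    (l : ℝ) (hl : A₂ = A₁ + l • g) :
    ∀ x₁ x₂ x₃ x₄ : V,
      kn (fun u v => g u v) (fun u v => A₂ (a₂ u) v) x₁ x₂ x₃ x₄
        + (((n : ℝ) - 2) / 2) * kn (fun u v => A₂ u v) (fun u v => A₂ u v) x₁ x₂ x₃ x₄
        - LinearMap.trace ℝ V a₂ * kn (fun u v => g u v) (fun u v => A₂ u v) x₁ x₂ x₃ x₄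
        + (((LinearMap.trace ℝ V a₂) ^ 2 - LinearMap.trace ℝ V (a₂ ∘ₗ a₂))
              / (2 * ((n : ℝ) - 1)))
            * kn (fun u v => g u v) (fun u v => g u v) x₁ x₂ x₃ x₄
      = kn (fun u v => g u v) (fun u v => A₁ (a₁ u) v) x₁ x₂ x₃ x₄
        + (((n : ℝ) - 2) / 2) * kn (fun u v => A₁ u v) (fun u v => A₁ u v) x₁ x₂ x₃ x₄
        - LinearMap.trace ℝ V a₁ * kn (fun u v => g u v) (fun u v => A₁ u v) x₁ x₂ x₃ x₄
        + (((LinearMap.trace ℝ V a₁) ^ 2 - LinearMap.trace ℝ V (a₁ ∘ₗ a₁))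
              / (2 * ((n : ℝ) - 1)))
            * kn (fun u v => g u v) (fun u v => g u v) x₁ x₂ x₃ x₄ := by
  intro x₁ x₂ x₃ x₄
  have hA2v : ∀ u v : V, A₂ u v = A₁ u v + l * g u v := by
    intro u v; rw [hl]; simp
  have ha2eq : ∀ x : V, a₂ x = a₁ x + l • x := by
    intro x
    have h0 : a₂ x - (a₁ x + l • x) = 0 := by
      apply hgnd
      intro y
      have := hA2v x y
      rw [← ha₂, ← ha₁] at this
      simp only [map_sub, map_add, map_smul, LinearMap.sub_apply, LinearMap.add_apply,
        LinearMap.smul_apply, smul_eq_mul]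
      linarith
    exact sub_eq_zero.mp h0
  have ha2lm : a₂ = a₁ + l • LinearMap.id := by
    ext x; simp [ha2eq x]
  have ht : LinearMap.trace ℝ V a₂ = LinearMap.trace ℝ V a₁ + l * n := by
    rw [ha2lm, map_add, map_smul, LinearMap.trace_id, hdim]; simp [mul_comm]
  have hs : LinearMap.trace ℝ V (a₂ ∘ₗ a₂)
      = LinearMap.trace ℝ V (a₁ ∘ₗ a₁) + 2 * l * LinearMap.trace ℝ V a₁ + l ^ 2 * n := by
    rw [ha2lm]
    simp only [LinearMap.add_comp, LinearMap.comp_add, LinearMap.smul_comp,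
      LinearMap.comp_smul, LinearMap.id_comp, LinearMap.comp_id, map_add, map_smul,
      LinearMap.trace_id, hdim, smul_eq_mul, smul_smul]
    ring
  have hne : (2 : ℝ) * ((n : ℝ) - 1) ≠ 0 := by
    have : (4 : ℝ) ≤ (n : ℝ) := by exact_mod_cast hn4
    nlinarith
  simp only [kn, hA2v, ha2eq, map_add, map_smul, LinearMap.add_apply, LinearMap.smul_apply,
    smul_eq_mul, ha₁, ht, hs]
  have hne1 : (n : ℝ) - 1 ≠ 0 := by
    intro h; apply hne; rw [h]; ring
  field_simp
  ring
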